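/- If the true causal DAG G satisfies the Causal Markov and Adjacency-Faithfulness assumptions with respect to a perfect conditional independence oracle, then the graph produced by step S2 of the SGS algorithm (removing an edge between X and Y iff some subset S of V \ {X, Y} renders them independent) has exactly the adjacencies of G. -/

import Mathlib

/-- A directed acyclic graph on vertex set `V`. -/
structure DAG (V : Type*) where
  Edge : V → V → Prop
  acyclic : ∀ x, ¬ Relation.TransGen Edge x x

namespace DAG

variable {V : Type*} (G : DAG V)

/-- `x` and `y` are adjacent: there is an edge between them in either direction. -/
def Adj (x y : V) : Prop := G.Edge x y ∨ G.Edge y x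

/-- `y` is a descendant of `x` (`x` is an ancestor of `y`); reflexive. -/
def Desc (x y : V) : Prop := Relation.ReflTransGen G.Edge x y

/-- The parents of `v`. -/
def Parents (v : V) : Set V := {u | G.Edge u v}

/-- The vertices that are neither parents nor descendants of `v`. -/
def NonDescNonPar (v : V) : Set V := {u | ¬ G.Desc v u ∧ ¬ G.Edge u v}

/-- `b` is a collider on the path `p`: `p` contains a consecutive subsequence
`a, b, c` with both edges pointing into `b`. -/
def ColliderOn (p : List V) (b : V) : Prop :=
  ∃ a c, [a, b, c] <:+: p ∧ G.Edge a b ∧ G.Edge c b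

/-- `b` is active on the path `p` between `x` and `y` conditional on `Z`:
it is an endpoint, or a noncollider not in `Z`, or a collider that is in `Z`
or has a descendant in `Z`. -/
def ActiveOn (p : List V) (x y : V) (Z : Set V) (b : V) : Prop :=
  b = x ∨ b = y ∨
    (¬ G.ColliderOn p b ∧ b ∉ Z) ∨
    (G.ColliderOn p b ∧ ∃ d ∈ Z, G.Desc b d)

/-- `p` is an acyclic path between `x` and `y`, every vertex of which is
active conditional on `Z`. -/
def ActivePath (p : List V) (x y : V) (Z : Set V) : Prop :=
  p.Nodup ∧ 2 ≤ p.length ∧ p.Chain' G.Adj ∧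
    p.head? = some x ∧ p.getLast? = some y ∧
    ∀ b ∈ p, G.ActiveOn p x y Z b

/-- `x` is d-separated from `y` conditional on `Z`: there is no active acyclic
path between `x` and `y` conditional on `Z`. -/
def DSep (x y : V) (Z : Set V) : Prop := ¬ ∃ p : List V, G.ActivePath p x y Z

/-- `(x, y, z)` is an unshielded collider. -/
def UnshieldedCollider (x y z : V) : Prop :=
  G.Edge x y ∧ G.Edge z y ∧ ¬ G.Adj x z

/-- `(x, y, z)` is an unshielded noncollider. -/
def UnshieldedNoncollider (x y z : V) : Prop :=
  G.Adj x y ∧ G.Adj y z ∧ ¬ G.Adj x z ∧ ¬ (G.Edge x y ∧ G.Edge z y)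

section Aux

variable {V : Type*} (G : DAG V)

lemma adj_symm {x y : V} (h : G.Adj x y) : G.Adj y x := h.elim Or.inr Or.inl

lemma no_self_edge (x : V) : ¬ G.Edge x x :=
  fun h => G.acyclic x (Relation.TransGen.single h)

lemma no_two_cycle {x y : V} (hxy : x ≠ y) (h1 : G.Desc x y) (h2 : G.Desc y x) :
    False := by
  rcases (Relation.reflTransGen_iff_eq_or_transGen.mp h1) with h | h
  · exact hxy h.symm
  · rcases (Relation.reflTransGen_iff_eq_or_transGen.mp h2) with h2 | h2
    · exact hxy h2
    · exact G.acyclic x (h.trans h2)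

lemma colliderOn_reverse {p : List V} {b : V} :
    G.ColliderOn p.reverse b ↔ G.ColliderOn p b := by
  constructor <;> rintro ⟨a, c, hinf, h1, h2⟩
  · refine ⟨c, a, ?_, h2, h1⟩
    have h3 : ([c, b, a] : List V).reverse <:+: p.reverse := by simpa using hinf
    exact List.reverse_infix.mp h3
  · refine ⟨c, a, ?_, h2, h1⟩
    simpa using List.reverse_infix.mpr hinf

lemma activePath_reverse {p : List V} {x y : V} {Z : Set V}
    (h : G.ActivePath p x y Z) : G.ActivePath p.reverse y x Z := by
  obtain ⟨hnd, hlen, hch, hhd, hlast, hact⟩ := h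
  refine ⟨by simpa using hnd, by simpa using hlen, ?_, by simpa using hlast,
    by simpa using hhd, ?_⟩
  · show List.IsChain G.Adj p.reverse
    rw [List.isChain_reverse]
    exact hch.imp fun _ _ h => G.adj_symm h
  · intro b hb
    have hb' : b ∈ p := by simpa using hb
    rcases hact b hb' with h | h | ⟨h1, h2⟩ | ⟨h1, h2⟩
    · exact Or.inr (Or.inl h)
    · exact Or.inl h
    · exact Or.inr (Or.inr (Or.inl ⟨by rwa [G.colliderOn_reverse], h2⟩))
    · exact Or.inr (Or.inr (Or.inr ⟨by rwa [G.colliderOn_reverse], h2⟩))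

/-- Key induction: along an active path (w.r.t. `Parents x`) starting with a
forward edge, all edges point forward, so `x` is an ancestor of `y`. -/
lemma push {x y : V} {p : List V}
    (hnd : p.Nodup) (hhd : p.head? = some x) (hlast : p.getLast? = some y)
    (hch : p.Chain' G.Adj)
    (hact : ∀ b ∈ p, G.ActiveOn p x y (G.Parents x) b) :
    ∀ (t s : List V) (a b : V), p = s ++ a :: b :: t →
      G.Edge a b → G.Desc x b → G.Desc x y := by
  intro t
  induction t with
  | nil =>
    intro s a b hp he hd
    have : p.getLast? = some b := by
      rw [hp]
      have : s ++ [a, b] = (s ++ [a]) ++ [b] := by simp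
      rw [this, List.getLast?_concat]
    rw [hlast] at this
    obtain rfl : y = b := by injection this
    exact hd
  | cons c t' ih =>
    intro s a b hp he hd
    -- adjacency between b and c
    have hch2 : (a :: b :: c :: t').Chain' G.Adj := by
      rw [hp] at hch
      exact (List.isChain_append.mp hch).2.1
    have hbc : G.Adj b c := by
      rcases hch2 with _ | _ | ⟨_, hch3⟩
      rcases hch3 with _ | _ | ⟨h, _⟩
      exact h
    rcases hbc with hbc | hcb
    · exact ih (s ++ [a]) b c (by rw [hp]; simp) hbc (hd.tail hbc)
    · -- b is a collider on p
      have hcol : G.ColliderOn p b :=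
        ⟨a, c, ⟨s, t', by rw [hp]; simp⟩, he, hcb⟩
      -- b ∈ p
      have hbp : b ∈ p := by rw [hp]; simp
      -- nodup of the infix
      have hnd2 : (a :: b :: c :: t').Nodup := by
        rw [hp] at hnd
        exact hnd.sublist (List.sublist_append_right s _)
      have hbno : b ∉ c :: t' := (List.nodup_cons.mp (List.nodup_cons.mp hnd2).2).1
      -- b ≠ y
      have hby : b ≠ y := by
        have h1 : p.getLast? = (c :: t').getLast? := by
          rw [hp]
          have : s ++ a :: b :: c :: t' = (s ++ [a, b]) ++ (c :: t') := by simp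
          rw [this]
          exact List.getLast?_append_of_ne_nil _ (by simp)
        rw [hlast] at h1
        have : y ∈ c :: t' := List.mem_of_mem_getLast? h1.symm
        exact fun hbe => hbno (hbe ▸ this)
      -- b ≠ x
      have hbx : b ≠ x := by
        cases s with
        | nil =>
          simp only [List.nil_append] at hp
          have : p.head? = some a := by rw [hp]; rfl
          rw [hhd] at this
          obtain rfl : x = a := by injection this
          rw [hp] at hnd
          have := (List.nodup_cons.mp hnd).1
          exact fun hbe => this (by simp [hbe.symm])
        | cons e s' =>
          have : p.head? = some e := by rw [hp]; rfl
          rw [hhd] at this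
          obtain rfl : x = e := by injection this
          rw [hp] at hnd
          have hx : x ∉ s' ++ a :: b :: c :: t' := (List.nodup_cons.mp hnd).1
          exact fun hbe => hx (by simp [hbe.symm])
      rcases hact b hbp with h | h | ⟨h1, _⟩ | ⟨_, d, hdZ, hbd⟩
      · exact absurd h hbx
      · exact absurd h hby
      · exact absurd hcol h1
      · exact absurd (Relation.TransGen.tail' (hd.trans hbd) hdZ) (G.acyclic x)

lemma dsep_of_nonadj {x y : V} (hxy : x ≠ y)
    (hndesc : ¬ G.Desc x y) (hnadj : ¬ G.Adj x y) :
    G.DSep x y (G.Parents x) := by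
  rintro ⟨p, hnd, hlen, hch, hhd, hlast, hact⟩
  obtain ⟨b, q, rfl⟩ : ∃ b q, p = x :: b :: q := by
    match p, hhd, hlen with
    | a :: b :: q, hhd, _ =>
      obtain rfl : a = x := by injection hhd
      exact ⟨b, q, rfl⟩
  have hxb : G.Adj x b := by
    rcases hch with _ | _ | ⟨h, _⟩
    exact h
  have hbx : b ≠ x := fun h => (List.nodup_cons.mp hnd).1 (by simp [h])
  -- helper: finish from a forward first edge
  have hpush : G.Edge x b → False := fun he =>
    hndesc (G.push hnd hhd hlast hch hact q [] x b rfl he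
      (Relation.ReflTransGen.single he))
  rcases hxb with hxb | hbxE
  · exact hpush hxb
  · -- b is a parent of x
    have hbZ : b ∈ G.Parents x := hbxE
    cases q with
    | nil =>
      have : (x :: b :: ([] : List V)).getLast? = some b := rfl
      rw [hlast] at this
      obtain rfl : y = b := by injection this
      exact hnadj (Or.inr hbxE)
    | cons c t' =>
      have hnd2 : (b :: c :: t').Nodup := (List.nodup_cons.mp hnd).2
      have hbno : b ∉ c :: t' := (List.nodup_cons.mp hnd2).1
      have hby : b ≠ y := by
        have h1 : (x :: b :: c :: t').getLast? = (c :: t').getLast? := by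
          have : x :: b :: c :: t' = [x, b] ++ (c :: t') := rfl
          rw [this]
          exact List.getLast?_append_of_ne_nil _ (by simp)
        rw [hlast] at h1
        have : y ∈ c :: t' := List.mem_of_mem_getLast? h1.symm
        exact fun hbe => hbno (hbe ▸ this)
      rcases hact b (by simp) with h | h | ⟨_, h2⟩ | ⟨hcol, _⟩
      · exact hbx h
      · exact hby h
      · exact h2 hbZ
      · -- the collider triple must be [x, b, c], giving a forward edge x → b
        obtain ⟨a, c', ⟨s, t'', hs⟩, ha, _⟩ := hcol
        cases s with
        | nil =>
          simp only [List.nil_append, List.cons_append] at hs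
          obtain rfl : a = x := by injection hs
          exact hpush ha
        | cons e s' =>
          simp only [List.cons_append, List.append_assoc] at hs
          have hs2 : s' ++ a :: b :: c' :: t'' = b :: c :: t' := by
            have h := congrArg List.tail hs
            simpa using h
          have hbmem : b ∈ b :: c :: t' := by simp
          rw [← hs2] at hbmem
          cases s' with
          | nil =>
            simp only [List.nil_append] at hs2
            have h2 : c :: t' = b :: c' :: t'' := by
              have h := congrArg List.tail hs2
              simpa using h.symm
            exact hbno (h2 ▸ List.mem_cons_self (a := b))
          | cons f s'' =>
            have h2 : s'' ++ a :: b :: c' :: t'' = c :: t' := by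
              have h := congrArg List.tail hs2
              simpa using h
            exact hbno (h2 ▸ (by simp : b ∈ s'' ++ a :: b :: c' :: t''))

end Aux

end DAG

/-- If the true causal DAG `G` satisfies the Causal Markov and
Adjacency-Faithfulness assumptions with respect to a perfect conditional independence
oracle `CI`, then step S2 of the SGS algorithm (keep an edge between `x` and `y` iff no
subset of the remaining variables renders them independent) recovers exactly the
adjacencies of `G`. -/
theorem sgs_step2_adjacencies_correct
    {V : Type*} [Fintype V] [DecidableEq V] (G : DAG V)
    (CI : V → V → Set V → Prop)
    (hMarkov : ∀ (x y : V) (Z : Set V), G.DSep x y Z → CI x y Z)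
    (hAdjFaith : ∀ x y : V, G.Adj x y →
      ∀ S : Set V, x ∉ S → y ∉ S → ¬ CI x y S) :
    ∀ x y : V, x ≠ y →
      ((¬ ∃ S : Set V, x ∉ S ∧ y ∉ S ∧ CI x y S) ↔ G.Adj x y) := by
  intro x y hxy
  constructor
  · intro h
    by_contra hnadj
    apply h
    by_cases hd : G.Desc x y
    · -- use parents of y
      have hndyx : ¬ G.Desc y x := fun h2 => G.no_two_cycle hxy hd h2
      have hds : G.DSep y x (G.Parents y) :=
        G.dsep_of_nonadj (Ne.symm hxy) hndyx (fun h2 => hnadj (G.adj_symm h2))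
      have hds' : G.DSep x y (G.Parents y) := by
        rintro ⟨p, hp⟩
        exact hds ⟨p.reverse, G.activePath_reverse hp⟩
      refine ⟨G.Parents y, ?_, ?_, hMarkov x y _ hds'⟩
      · exact fun h2 => hnadj (Or.inl h2)
      · exact G.no_self_edge y
    · refine ⟨G.Parents x, ?_, ?_, hMarkov x y _ (G.dsep_of_nonadj hxy hd hnadj)⟩
      · exact G.no_self_edge x
      · exact fun h2 => hnadj (Or.inr h2)
  · rintro hadj ⟨S, hxS, hyS, hCI⟩
    exact hAdjFaith x y hadj S hxS hyS hCI
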